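/- For every integer n ≥ 2 and every integer i with 1 ≤ i ≤ n, the cardinality of 𝔅_n(i) equals ∑_{k=1}^{n−1} 2^k · ( C(2n−i−k−1, n−i) − C(2n−i−k−1, n−i−k) ). -/

import Mathlib

/-- A `B_n`-path: a word of length `2n` over the alphabet `{r, f}` (here `true` stands
for `r` and `false` for `f`) such that every prefix contains at least as many `r`'s
as `f`'s. -/
def BPaths (n : ℕ) : Finset (Fin (2*n) → Bool) :=
  Finset.univ.filter fun w =>
    ∀ m : Fin (2*n + 1),
      (Finset.univ.filter fun i : Fin (2*n) => (i : ℕ) < (m : ℕ) ∧ w i = false).card ≤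
      (Finset.univ.filter fun i : Fin (2*n) => (i : ℕ) < (m : ℕ) ∧ w i = true).card

/-- `𝔅_n(i)`: the set of `B_n`-paths whose first (leftmost) `f` occurs at the
(1-indexed) position `i`; by convention, for `i = 2n+1` this is the singleton
consisting of the all-`r` path. -/
def BPathsF (n i : ℕ) : Finset (Fin (2*n) → Bool) :=
  (BPaths n).filter fun w =>
    (∀ j : Fin (2*n), (j : ℕ) + 1 < i → w j = true) ∧
    (∀ j : Fin (2*n), (j : ℕ) + 1 = i → w j = false)

/-- The binomial coefficient `C(m, r)` for integer arguments, with the convention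
that `C(m, r) = 0` when `r < 0` or `r > m`. -/
def intChoose (m r : ℤ) : ℤ :=
  if 0 ≤ r ∧ r ≤ m then ((m.toNat).choose r.toNat : ℤ) else 0

section AuxProof
open Finset


def cnt (b : Bool) (W : ℕ → Bool) (m : ℕ) : ℕ :=
  ((Finset.range m).filter fun j => W j = b).card

lemma cnt_zero (b W) : cnt b W 0 = 0 := by simp [cnt]

lemma cnt_succ (b W m) : cnt b W (m+1) = cnt b W m + (if W m = b then 1 else 0) := by
  unfold cnt
  rw [Finset.range_add_one, Finset.filter_insert]
  split
  · rw [Finset.card_insert_of_notMem (by simp)]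
  · omega

lemma cnt_shift (b W p q) : cnt b W (p + q) = cnt b W p + cnt b (fun j => W (p + j)) q := by
  induction q with
  | zero => simp [cnt]
  | succ q ih => rw [← Nat.add_assoc, cnt_succ, ih, cnt_succ]; omega

lemma cnt_congr (b W W' m) (h : ∀ j < m, W j = W' j) : cnt b W m = cnt b W' m := by
  unfold cnt
  congr 1
  apply Finset.filter_congr
  intro x hx
  rw [h x (Finset.mem_range.mp hx)]

lemma cnt_true_all (W m) (h : ∀ j < m, W j = true) : cnt true W m = m := by
  unfold cnt
  rw [Finset.filter_true_of_mem (by intro x hx; exact h x (Finset.mem_range.mp hx)), Finset.card_range]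

lemma cnt_false_all (W m) (h : ∀ j < m, W j = true) : cnt false W m = 0 := by
  unfold cnt
  rw [Finset.filter_false_of_mem, Finset.card_empty]
  intro x hx; simp [h x (Finset.mem_range.mp hx)]

def extW {L : ℕ} (w : Fin L → Bool) : ℕ → Bool :=
  fun j => if h : j < L then w ⟨j, h⟩ else true

lemma extW_coe {L : ℕ} (w : Fin L → Bool) (j : Fin L) : extW w ↑j = w j := by
  simp [extW, j.isLt]

/-- Walks of length `L` where every prefix has `#false ≤ #true + h`. -/
def Wgood (L h : ℕ) : Finset (Fin L → Bool) :=
  Finset.univ.filter fun w => ∀ m ≤ L, cnt false (extW w) m ≤ cnt true (extW w) m + h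

def fwalk : ℕ → ℕ → ℕ
  | 0, _ => 1
  | (L+1), h => fwalk L (h+1) + if h = 0 then 0 else fwalk L (h-1)

lemma mem_Wgood {L h : ℕ} (w : Fin L → Bool) :
    w ∈ Wgood L h ↔ ∀ m ≤ L, cnt false (extW w) m ≤ cnt true (extW w) m + h := by
  simp [Wgood]

lemma extW_cons_zero {L : ℕ} (b : Bool) (v : Fin L → Bool) :
    extW (Fin.cons b v : Fin (L+1) → Bool) 0 = b := by
  simp [extW, Nat.succ_pos]

lemma extW_cons_succ {L : ℕ} (b : Bool) (v : Fin L → Bool) (j : ℕ) :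
    extW (Fin.cons b v : Fin (L+1) → Bool) (j+1) = extW v j := by
  unfold extW
  by_cases h : j < L
  · rw [dif_pos (by omega), dif_pos h]
    exact Fin.cons_succ (α := fun _ : Fin (L+1) => Bool) b v ⟨j, h⟩
  · rw [dif_neg (by omega), dif_neg h]

lemma cnt_extW_cons {L : ℕ} (b' b : Bool) (v : Fin L → Bool) (m : ℕ) :
    cnt b' (extW (Fin.cons b v : Fin (L+1) → Bool)) (m+1)
      = (if b = b' then 1 else 0) + cnt b' (extW v) m := by
  rw [Nat.add_comm m 1, cnt_shift]
  congr 1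
  · simp only [cnt, Finset.range_one, Finset.filter_singleton, extW_cons_zero]
    by_cases hbb : b = b' <;> simp [hbb]
  · apply cnt_congr
    intro j _
    rw [Nat.add_comm 1 j, extW_cons_succ]

lemma mem_Wgood_cons {L h : ℕ} (b : Bool) (v : Fin L → Bool) :
    (Fin.cons b v : Fin (L+1) → Bool) ∈ Wgood (L+1) h ↔
      (b = true ∧ v ∈ Wgood L (h+1)) ∨ (b = false ∧ 1 ≤ h ∧ v ∈ Wgood L (h-1)) := by
  simp only [mem_Wgood]
  constructor
  · intro H
    cases b with
    | false =>
      right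
      have h1 := H 1 (by omega)
      rw [cnt_extW_cons, cnt_extW_cons] at h1
      simp [cnt_zero] at h1
      refine ⟨rfl, h1, ?_⟩
      intro m hm
      have := H (m+1) (by omega)
      rw [cnt_extW_cons, cnt_extW_cons] at this
      simp at this
      omega
    | true =>
      left
      refine ⟨rfl, ?_⟩
      intro m hm
      have := H (m+1) (by omega)
      rw [cnt_extW_cons, cnt_extW_cons] at this
      simp at this
      omega
  · intro H m hm
    match m with
    | 0 => simp [cnt_zero]
    | (m+1) =>
      rw [cnt_extW_cons, cnt_extW_cons]
      rcases H with ⟨rfl, H⟩ | ⟨rfl, h1, H⟩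
      · have := H m (by omega); simp; omega
      · have := H m (by omega); simp; omega

lemma card_Wgood : ∀ L h, (Wgood L h).card = fwalk L h := by
  intro L
  induction L with
  | zero =>
    intro h
    have : Wgood 0 h = Finset.univ := by
      apply Finset.filter_true_of_mem
      intro w _ m hm
      interval_cases m
      simp [cnt_zero]
    rw [this, fwalk]
    simp [Finset.card_univ]
  | succ L ih =>
    intro h
    have key : Wgood (L+1) h = (Wgood L (h+1)).image (Fin.cons (α := fun _ : Fin (L+1) => Bool) true)
        ∪ (if 1 ≤ h then (Wgood L (h-1)).image (Fin.cons (α := fun _ : Fin (L+1) => Bool) false) else ∅) := by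
      ext w
      rw [← Fin.cons_self_tail w, mem_Wgood_cons, Finset.mem_union]
      constructor
      · rintro (⟨hb, hv⟩ | ⟨hb, h1, hv⟩)
        · left; rw [hb]; exact Finset.mem_image_of_mem (Fin.cons (α := fun _ : Fin (L+1) => Bool) true) hv
        · right; rw [if_pos h1, hb]; exact Finset.mem_image_of_mem (Fin.cons (α := fun _ : Fin (L+1) => Bool) false) hv
      · rintro (hmem | hmem)
        · obtain ⟨v, hv, hveq⟩ := Finset.mem_image.mp hmem
          rw [Fin.cons_inj] at hveq
          exact Or.inl ⟨hveq.1.symm, hveq.2 ▸ hv⟩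
        · split at hmem
          · obtain ⟨v, hv, hveq⟩ := Finset.mem_image.mp hmem
            rw [Fin.cons_inj] at hveq
            exact Or.inr ⟨hveq.1.symm, by assumption, hveq.2 ▸ hv⟩
          · simp at hmem
    have hdisj : Disjoint ((Wgood L (h+1)).image (Fin.cons (α := fun _ : Fin (L+1) => Bool) true))
        (if 1 ≤ h then (Wgood L (h-1)).image (Fin.cons (α := fun _ : Fin (L+1) => Bool) false) else ∅) := by
      rw [Finset.disjoint_left]
      intro w hw hw'
      obtain ⟨v, _, hveq⟩ := Finset.mem_image.mp hw
      split at hw'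
      · obtain ⟨v', _, hveq'⟩ := Finset.mem_image.mp hw'
        rw [← hveq'] at hveq
        exact absurd (Fin.cons_inj.mp hveq).1 (by simp)
      · simp at hw'
    rw [key, Finset.card_union_of_disjoint hdisj,
      Finset.card_image_of_injective _ (Fin.cons_right_injective (α := fun _ : Fin (L+1) => Bool) true), ih]
    rw [fwalk]
    by_cases h0 : h = 0
    · subst h0; simp
    · rw [if_pos (by omega), if_neg h0,
        Finset.card_image_of_injective _ (Fin.cons_right_injective (α := fun _ : Fin (L+1) => Bool) false), ih]


lemma card_filter_univ_fin (L : ℕ) (p : ℕ → Prop) [DecidablePred p] :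
    (Finset.univ.filter fun j : Fin L => p ↑j).card = ((Finset.range L).filter p).card := by
  rw [Finset.card_filter, Finset.card_filter]
  exact Fin.sum_univ_eq_sum_range (fun j => if p j then 1 else 0) L

lemma fin_count {L : ℕ} (w : Fin L → Bool) (b : Bool) (m : ℕ) :
    (Finset.univ.filter fun j : Fin L => (j:ℕ) < m ∧ w j = b).card
      = cnt b (extW w) (min m L) := by
  have h1 : (Finset.univ.filter fun j : Fin L => (j:ℕ) < m ∧ w j = b)
      = Finset.univ.filter fun j : Fin L => (fun x => x < m ∧ extW w x = b) ↑j := by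
    apply Finset.filter_congr; intro j _; simp [extW_coe]
  rw [h1, card_filter_univ_fin L (fun x => x < m ∧ extW w x = b)]
  unfold cnt
  congr 1
  ext x
  simp only [Finset.mem_filter, Finset.mem_range, lt_min_iff]
  tauto

lemma mem_BPaths {n : ℕ} (w : Fin (2*n) → Bool) :
    w ∈ BPaths n ↔ ∀ m ≤ 2*n, cnt false (extW w) m ≤ cnt true (extW w) m := by
  simp only [BPaths, Finset.mem_filter, Finset.mem_univ, true_and]
  constructor
  · intro H m hm
    have := H ⟨m, by omega⟩
    rwa [fin_count, fin_count, Nat.min_eq_left hm] at this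
  · intro H m
    rw [fin_count, fin_count]
    exact H _ (by omega)

lemma card_BPathsF_eq_Wgood (n i : ℕ) (hi : 2 ≤ i) (hin : i ≤ n) :
    (BPathsF n i).card = (Wgood (2*n - i) (i - 2)).card := by
  have h2n : i ≤ 2*n := by omega
  refine Finset.card_bij' (fun w _ => fun s : Fin (2*n - i) => w ⟨i + (s:ℕ), by omega⟩)
    (fun v _ => fun j : Fin (2*n) => if hj : i ≤ ↑j then v ⟨↑j - i, by omega⟩
      else decide ((j:ℕ) + 1 < i)) ?hi ?hj ?li ?ri
  -- hi : forward maps into Wgood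
  case hi =>
    intro w hw
    simp only [BPathsF, Finset.mem_filter, mem_BPaths] at hw
    obtain ⟨hcnt, hr, hf⟩ := hw
    rw [mem_Wgood]
    intro t ht
    have hW1 : ∀ j < i - 1, extW w j = true := by
      intro j hj
      rw [show j = ((⟨j, by omega⟩ : Fin (2*n)) : ℕ) from rfl, extW_coe]
      exact hr _ (by simp; omega)
    have hWi : extW w (i-1) = false := by
      rw [show i - 1 = ((⟨i-1, by omega⟩ : Fin (2*n)) : ℕ) from rfl, extW_coe]
      exact hf _ (by simp; omega)
    have hct : cnt true (extW w) i = i - 1 := by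
      have h' : i = (i-1) + 1 := by omega
      rw [h', cnt_succ, cnt_true_all _ _ hW1, hWi]
      simp
      all_goals omega
    have hcf : cnt false (extW w) i = 1 := by
      have h' : i = (i-1) + 1 := by omega
      rw [h', cnt_succ, cnt_false_all _ _ hW1, hWi]
      simp
    have hmain := hcnt (i + t) (by omega)
    rw [cnt_shift, cnt_shift, hct, hcf] at hmain
    have htr : ∀ b, cnt b (fun j => extW w (i + j)) t
        = cnt b (extW (fun s : Fin (2*n - i) => w ⟨i + (s:ℕ), by omega⟩)) t := by
      intro b
      apply cnt_congr
      intro j hj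
      have hj2 : j < 2*n - i := by omega
      have hij : i + j < 2*n := by omega
      show extW w (i + j) = extW (fun s : Fin (2*n - i) => w ⟨i + (s:ℕ), by omega⟩) j
      unfold extW
      rw [dif_pos hij, dif_pos hj2]
    rw [← htr false, ← htr true]
    omega
  -- hj : backward maps into BPathsF
  case hj =>
    intro v hv
    rw [mem_Wgood] at hv
    set ψ : Fin (2*n) → Bool := fun j : Fin (2*n) => if hj : i ≤ ↑j then v ⟨↑j - i, by omega⟩
      else decide ((j:ℕ) + 1 < i) with hψ
    have hr : ∀ j : Fin (2*n), (j:ℕ) + 1 < i → ψ j = true := by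
      intro j hj
      simp only [hψ]
      rw [dif_neg (by omega)]
      exact decide_eq_true hj
    have hfj : ∀ j : Fin (2*n), (j:ℕ) + 1 = i → ψ j = false := by
      intro j hj
      simp only [hψ]
      rw [dif_neg (by omega)]
      exact decide_eq_false (by omega)
    simp only [BPathsF, Finset.mem_filter, mem_BPaths]
    refine ⟨?_, hr, hfj⟩
    intro m hm
    have hW1 : ∀ j < i - 1, extW ψ j = true := by
      intro j hj
      rw [show j = ((⟨j, by omega⟩ : Fin (2*n)) : ℕ) from rfl, extW_coe]
      exact hr _ (by simp; omega)
    by_cases hmi : m ≤ i - 1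
    · rw [cnt_false_all _ _ (fun j hj => hW1 j (by omega))]
      omega
    · -- m ≥ i
      have : m = i + (m - i) := by omega
      rw [this, cnt_shift, cnt_shift]
      have hWi : extW ψ (i-1) = false := by
        rw [show i - 1 = ((⟨i-1, by omega⟩ : Fin (2*n)) : ℕ) from rfl, extW_coe]
        exact hfj _ (by simp; omega)
      have hct : cnt true (extW ψ) i = i - 1 := by
        have h' : i = (i-1) + 1 := by omega
        rw [h', cnt_succ, cnt_true_all _ _ hW1, hWi]
        simp
        all_goals omega
      have hcf : cnt false (extW ψ) i = 1 := by
        have h' : i = (i-1) + 1 := by omega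
        rw [h', cnt_succ, cnt_false_all _ _ hW1, hWi]
        simp
      rw [hct, hcf]
      have htr : ∀ b, cnt b (fun j => extW ψ (i + j)) (m - i) = cnt b (extW v) (m - i) := by
        intro b
        apply cnt_congr
        intro j hj
        have hj2 : j < 2*n - i := by omega
        have hij : i + j < 2*n := by omega
        show extW ψ (i + j) = extW v j
        unfold extW
        rw [dif_pos hij, dif_pos hj2]
        simp only [hψ]
        split
        · congr 1
          apply Fin.ext
          show (i + j) - i = j
          omega
        · rename_i hcon
          exact absurd (Nat.le_add_right i j) hcon
      rw [htr true, htr false]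
      have := hv (m - i) (by omega)
      omega
  -- left inverse
  case li =>
    intro w hw
    simp only [BPathsF, Finset.mem_filter, mem_BPaths] at hw
    obtain ⟨_, hr, hf⟩ := hw
    funext j
    dsimp only
    by_cases hj : i ≤ ↑j
    · rw [dif_pos hj]
      congr 1
      apply Fin.ext
      show i + (↑j - i) = ↑j
      omega
    · rw [dif_neg hj]
      by_cases hj2 : (j:ℕ) + 1 < i
      · rw [hr j hj2]
        exact decide_eq_true hj2
      · rw [hf j (by omega)]
        exact decide_eq_false (by omega)
  -- right inverse
  case ri =>
    intro v hv
    funext t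
    dsimp only
    split
    · congr 1
      apply Fin.ext
      show (i + ↑t) - i = ↑t
      omega
    · rename_i hcon
      exact absurd (Nat.le_add_right i ↑t) hcon

lemma intChoose_natCast (M r : ℕ) : intChoose M r = (M.choose r : ℤ) := by
  unfold intChoose
  by_cases h : (r:ℤ) ≤ (M:ℤ)
  · rw [if_pos ⟨Int.natCast_nonneg r, h⟩]
    simp
  · rw [if_neg (by tauto), Nat.choose_eq_zero_of_lt (by exact_mod_cast not_le.mp h)]
    simp

lemma intChoose_neg {m r : ℤ} (h : r < 0 ∨ m < r) : intChoose m r = 0 := by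
  unfold intChoose
  rw [if_neg (by omega)]

lemma intChoose_symm (m r : ℤ) : intChoose m r = intChoose m (m - r) := by
  unfold intChoose
  by_cases h : 0 ≤ r ∧ r ≤ m
  · rw [if_pos h, if_pos ⟨by omega, by omega⟩]
    congr 1
    have h1 : (m - r).toNat = m.toNat - r.toNat := by omega
    rw [h1, Nat.choose_symm (by omega)]
  · rw [if_neg h, if_neg (by omega)]

lemma intChoose_zero (r : ℤ) : intChoose 0 r = if r = 0 then 1 else 0 := by
  unfold intChoose
  by_cases h : r = 0
  · subst h; simp
  · rw [if_neg (by omega), if_neg h]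

lemma intChoose_pascal (L : ℕ) (r : ℤ) :
    intChoose ((L:ℤ)+1) r = intChoose L r + intChoose L (r-1) := by
  unfold intChoose
  by_cases h0 : 0 ≤ r ∧ r ≤ (L:ℤ)+1
  · rw [if_pos h0]
    rcases eq_or_lt_of_le h0.1 with hr0 | hr0
    · -- r = 0
      rw [if_pos ⟨by omega, by omega⟩, if_neg (by omega)]
      simp [← hr0]
    · by_cases hrL : r ≤ (L:ℤ)
      · rw [if_pos ⟨by omega, hrL⟩, if_pos ⟨by omega, by omega⟩]
        have h1 : ((L:ℤ)+1).toNat = L + 1 := by omega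
        have h2 : r.toNat = (r-1).toNat + 1 := by omega
        have h4 : ((L:ℤ)).toNat = L := by omega
        rw [h1, h4, h2, Nat.choose_succ_succ]
        push_cast
        ring
      · -- r = L + 1
        have hr : r = (L:ℤ) + 1 := by omega
        rw [if_neg (by omega), if_pos ⟨by omega, by omega⟩]
        have h1 : ((L:ℤ)+1).toNat = L + 1 := by omega
        have h2 : (r-1).toNat = L := by omega
        rw [h1, h2]
        have h3 : r.toNat = L + 1 := by omega
        rw [h3]
        simp
  · rw [if_neg h0, if_neg (by omega), if_neg (by omega)]
    simp

/-- Vandermonde with upper indices. -/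
lemma vup (j : ℕ) : ∀ m a : ℕ, ∑ k ∈ range (m+1), (k.choose j) * ((m-k).choose a)
    = (m+1).choose (j+a+1) := by
  intro m
  induction m with
  | zero =>
    intro a
    rw [Finset.sum_range_one]
    match j, a with
    | 0, 0 => simp
    | 0, (a+1) => rw [Nat.choose_eq_zero_of_lt (show 1 < 0+(a+1)+1 by omega)]; simp
    | (j+1), a => simp [Nat.choose_eq_zero_of_lt (by omega : 1 < j + 1 + a + 1)]
  | succ m ih =>
    intro a
    cases a with
    | zero =>
      simp only [Nat.choose_zero_right, Nat.mul_one]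
      by_cases hj : j ≤ m + 1
      · rw [Finset.range_eq_Ico, ← Finset.sum_Ico_consecutive _ (Nat.zero_le j) (by omega : j ≤ m+2)]
        rw [Finset.sum_eq_zero (fun k hk => Nat.choose_eq_zero_of_lt (Finset.mem_Ico.mp hk).2)]
        rw [show m + 2 = m + 1 + 1 from rfl, Finset.Ico_add_one_right_eq_Icc, Nat.sum_Icc_choose]
        simp
      · rw [Finset.sum_eq_zero (fun k hk => Nat.choose_eq_zero_of_lt (by
          have := Finset.mem_range.mp hk; omega))]
        rw [Nat.choose_eq_zero_of_lt (by omega)]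
    | succ a =>
      rw [Finset.sum_range_succ, Nat.sub_self, Nat.choose_zero_succ, Nat.mul_zero, Nat.add_zero]
      rw [Finset.sum_congr rfl (fun k hk => by
        have hk' := Finset.mem_range.mp hk
        rw [show m + 1 - k = (m - k) + 1 by omega, Nat.choose_succ_succ, Nat.mul_add])]
      rw [Finset.sum_add_distrib, ih a, ih (a+1)]
      rw [show j + (a+1) + 1 = (j + a + 1) + 1 by omega, Nat.choose_succ_succ (m+1) (j+a+1)]

lemma fwalk_eq : ∀ L h : ℕ, (fwalk L h : ℤ)
    = ∑ j ∈ range (h+1), intChoose L ((((L+h)/2 : ℕ) : ℤ) - j) := by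
  intro L
  induction L with
  | zero =>
    intro h
    rw [show fwalk 0 h = 1 from rfl]
    have key : ∀ j ∈ range (h+1), intChoose ((0:ℕ):ℤ) ((((0+h)/2 : ℕ):ℤ) - (j:ℤ))
        = if j = h/2 then (1:ℤ) else 0 := by
      intro j hj
      rw [show ((0:ℕ):ℤ) = (0:ℤ) by norm_num, intChoose_zero]
      by_cases hc : j = h/2
      · rw [if_pos (by subst hc; omega), if_pos hc]
      · rw [if_neg (fun hh => hc (by omega)), if_neg hc]
    rw [Finset.sum_congr rfl key, Finset.sum_ite_eq' (range (h+1)) (h/2) (fun _ => (1:ℤ))]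
    rw [if_pos (Finset.mem_range.mpr (by omega))]
    norm_num
  | succ L ih =>
    intro h
    have hcast : ((L+1 : ℕ) : ℤ) = (L:ℤ) + 1 := by push_cast; ring
    cases h with
    | zero =>
      have hfw : fwalk (L+1) 0 = fwalk L 1 := by simp [fwalk]
      rw [hfw, ih 1]
      have hDg : (((L+1+0)/2 : ℕ) : ℤ) = (((L+1)/2 : ℕ) : ℤ) := by norm_num
      rw [Finset.sum_range_one, Finset.sum_range_succ, Finset.sum_range_one, hcast,
        intChoose_pascal, hDg]
      norm_num
    | succ h =>
      have hfw : fwalk (L+1) (h+1) = fwalk L (h+2) + fwalk L h := by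
        simp [fwalk]
      rw [hfw, Nat.cast_add, ih (h+2), ih h]
      set D : ℤ := (((L+h+2)/2 : ℕ) : ℤ) with hDdef
      have hD1 : (((L+(h+2))/2 : ℕ) : ℤ) = D := by rw [hDdef]; congr 1
      have hD2 : (((L+h)/2 : ℕ) : ℤ) = D - 1 := by
        rw [hDdef]
        have h2 : (L+h+2)/2 = (L+h)/2 + 1 := by omega
        rw [h2]
        push_cast; ring
      have hDg : (((L+1+(h+1))/2 : ℕ) : ℤ) = D := by rw [hDdef]; congr 1; omega
      rw [hD1, hD2, hDg, hcast]
      have ep : ∑ j ∈ range (h+1+1), intChoose ((L:ℤ)+1) (D - (j:ℤ))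
          = ∑ j ∈ range (h+1+1), (intChoose L (D - (j:ℤ)) + intChoose L (D - (j:ℤ) - 1)) :=
        Finset.sum_congr rfl (fun j _ => intChoose_pascal L (D - j))
      rw [ep, Finset.sum_add_distrib]
      have e1 : ∑ j ∈ range (h+2), intChoose L (D - j - 1)
          = ∑ j ∈ range (h+2), intChoose L (D - (j+1)) := by
        apply Finset.sum_congr rfl
        intro j _
        congr 1
        push_cast; ring
      have e2 : ∑ j ∈ range (h+1), intChoose L (D - 1 - j)
          = ∑ j ∈ range (h+1), intChoose L (D - (j+1)) := by
        apply Finset.sum_congr rfl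
        intro j _
        congr 1
        push_cast; ring
      have e3 : ∑ j ∈ range (h+3), intChoose L (D - j)
          = intChoose L (D - 0) + ∑ j ∈ range (h+2), intChoose L (D - (j+1)) := by
        rw [Finset.sum_range_succ']
        have : ∀ j ∈ range (h+2), intChoose (L:ℤ) (D - ↑(j+1)) = intChoose L (D - (j+1)) := by
          intro j _; norm_cast
        rw [Finset.sum_congr rfl this]
        push_cast
        ring
      have e4 : ∑ j ∈ range (h+2), intChoose L (D - j)
          = intChoose L (D - 0) + ∑ j ∈ range (h+1), intChoose L (D - (j+1)) := by
        rw [Finset.sum_range_succ']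
        have : ∀ j ∈ range (h+1), intChoose (L:ℤ) (D - ↑(j+1)) = intChoose L (D - (j+1)) := by
          intro j _; norm_cast
        rw [Finset.sum_congr rfl this]
        push_cast
        ring
      have e5 : ∑ j ∈ range (h+2), intChoose L (D - (j+1))
          = ∑ j ∈ range (h+1), intChoose L (D - (j+1)) + intChoose L (D - (h+1+1)) := by
        rw [Finset.sum_range_succ]
        push_cast
        ring
      rw [e1, e2, e3, e4, e5]
      push_cast
      ring

lemma R45 (n L j c : ℕ) (hn : 1 ≤ n) (hnL : n ≤ L) (hc : L - n ≤ c) (hcL : c ≤ L - 1) :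
    ∑ k ∈ range n, ((k.choose j : ℕ) : ℤ) * intChoose ((L:ℤ) - k - 1) (c:ℤ)
      = ((L.choose (j + c + 1) : ℕ) : ℤ) := by
  have step1 : ∀ k ∈ range n, ((k.choose j : ℕ):ℤ) * intChoose ((L:ℤ)-k-1) (c:ℤ)
      = ((k.choose j * (L-1-k).choose c : ℕ) : ℤ) := by
    intro k hk
    have hk' : k < n := Finset.mem_range.mp hk
    have hcast : ((L:ℤ) - k - 1) = ((L-1-k : ℕ) : ℤ) := by omega
    rw [hcast, intChoose_natCast]
    push_cast
    ring
  rw [Finset.sum_congr rfl step1, ← Nat.cast_sum]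
  congr 1
  have hsub : ∑ k ∈ range n, k.choose j * (L-1-k).choose c
      = ∑ k ∈ range ((L-1)+1), k.choose j * ((L-1) - k).choose c := by
    apply Finset.sum_subset (by rw [Finset.range_subset_range]; omega)
    intro x hx hnx
    rw [Finset.mem_range] at hx hnx
    have : L - 1 - x < c := by omega
    rw [Nat.choose_eq_zero_of_lt this, Nat.mul_zero]
  rw [hsub, vup j (L-1) c]
  congr 1
  omega

lemma partC (n i L a : ℕ) (hi : 2 ≤ i) (hin : i ≤ n) (hL : L = 2*n - i) (ha : a = n - i) :
    ∑ j ∈ range (i-2+1), intChoose (L:ℤ) ((((L + (i-2))/2 : ℕ) : ℤ) - (j:ℤ))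
      = ∑ k ∈ Finset.Icc 1 (n-1), (2:ℤ)^k *
          (intChoose (2*(n:ℤ) - i - k - 1) ((n:ℤ) - i) -
            intChoose (2*(n:ℤ) - i - k - 1) ((n:ℤ) - i - k)) := by
  have h2n : i ≤ 2*n := by omega
  have hdiv : (L + (i-2))/2 = n-1 := by omega
  have hiw : i-2+1 = i-1 := by omega
  rw [hdiv, hiw]
  have hterm : ∀ k ∈ Finset.Icc 1 (n-1), (2:ℤ)^k *
      (intChoose (2*(n:ℤ) - i - k - 1) ((n:ℤ) - i) -
        intChoose (2*(n:ℤ) - i - k - 1) ((n:ℤ) - i - k))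
      = (2:ℤ)^k * (intChoose ((L:ℤ) - k - 1) (a:ℤ) - intChoose ((L:ℤ)-k-1) ((a:ℤ) - (k:ℤ))) := by
    intro k _
    have e1 : 2*(n:ℤ) - i - k - 1 = (L:ℤ) - k - 1 := by omega
    have e2 : (n:ℤ) - i = (a:ℤ) := by omega
    rw [e1, e2]
  rw [Finset.sum_congr rfl hterm]
  have hIcc : Finset.Icc 1 (n-1) = (range n).erase 0 := by
    ext x
    simp only [Finset.mem_Icc, Finset.mem_erase, Finset.mem_range]
    omega
  rw [hIcc, Finset.sum_erase _ (by norm_num)]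
  have h2 : ∀ k ∈ range n, (2:ℤ)^k * (intChoose ((L:ℤ)-k-1) (a:ℤ) - intChoose ((L:ℤ)-k-1) ((a:ℤ)-(k:ℤ)))
      = ∑ j ∈ range n, ((k.choose j : ℕ):ℤ) *
          (intChoose ((L:ℤ)-k-1) (a:ℤ) - intChoose ((L:ℤ)-k-1) ((a:ℤ)-(k:ℤ))) := by
    intro k hk
    rw [← Finset.sum_mul]
    congr 1
    have hh : ∑ j ∈ range n, (k.choose j) = 2^k := by
      rw [← Nat.sum_range_choose k]
      symm
      apply Finset.sum_subset (by rw [Finset.range_subset_range]; exact Finset.mem_range.mp hk)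
      intro x hx hnx
      rw [Finset.mem_range] at hx hnx
      exact Nat.choose_eq_zero_of_lt (by omega)
    calc (2:ℤ)^k = ((2^k : ℕ) : ℤ) := by push_cast; ring
    _ = _ := by rw [← hh]; push_cast; ring
  rw [Finset.sum_congr rfl h2, Finset.sum_comm]
  have h3 : ∀ j ∈ range n, (∑ k ∈ range n, ((k.choose j : ℕ):ℤ) *
      (intChoose ((L:ℤ)-k-1) (a:ℤ) - intChoose ((L:ℤ)-k-1) ((a:ℤ)-(k:ℤ))))
      = intChoose (L:ℤ) ((a:ℤ)+1+j) - intChoose (L:ℤ) ((a:ℤ)-(j:ℤ)) := by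
    intro j _
    have hsplit : ∑ k ∈ range n, ((k.choose j : ℕ):ℤ) *
        (intChoose ((L:ℤ)-k-1) (a:ℤ) - intChoose ((L:ℤ)-k-1) ((a:ℤ)-(k:ℤ)))
        = (∑ k ∈ range n, ((k.choose j:ℕ):ℤ) * intChoose ((L:ℤ)-k-1) (a:ℤ))
          - ∑ k ∈ range n, ((k.choose j:ℕ):ℤ) * intChoose ((L:ℤ)-k-1) ((a:ℤ)-(k:ℤ)) := by
      rw [← Finset.sum_sub_distrib]
      apply Finset.sum_congr rfl
      intro k _
      ring
    have hA : ∑ k ∈ range n, ((k.choose j:ℕ):ℤ) * intChoose ((L:ℤ)-k-1) (a:ℤ)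
        = ((L.choose (j+a+1) : ℕ):ℤ) :=
      R45 n L j a (by omega) (by omega) (by omega) (by omega)
    have hBt : ∀ k ∈ range n, ((k.choose j:ℕ):ℤ) * intChoose ((L:ℤ)-k-1) ((a:ℤ)-(k:ℤ))
        = ((k.choose j:ℕ):ℤ) * intChoose ((L:ℤ)-k-1) ((n-1 : ℕ):ℤ) := by
      intro k _
      rw [intChoose_symm ((L:ℤ)-k-1) ((a:ℤ)-(k:ℤ))]
      congr 2
      omega
    have hB : ∑ k ∈ range n, ((k.choose j:ℕ):ℤ) * intChoose ((L:ℤ)-k-1) ((a:ℤ)-(k:ℤ))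
        = ((L.choose (j+(n-1)+1) : ℕ):ℤ) := by
      rw [Finset.sum_congr rfl hBt]
      exact R45 n L j (n-1) (by omega) (by omega) (by omega) (by omega)
    rw [hsplit, hA, hB, ← intChoose_natCast L (j+a+1), ← intChoose_natCast L (j+(n-1)+1)]
    congr 1
    · congr 1
      omega
    · rw [intChoose_symm]
      congr 1
      omega
  rw [Finset.sum_congr rfl h3, Finset.sum_sub_distrib]
  have hrefl : ∑ j ∈ range (i-1), intChoose (L:ℤ) ((((n-1):ℕ):ℤ) - (j:ℤ))
      = ∑ j ∈ range (i-1), intChoose (L:ℤ) ((a:ℤ)+1+(j:ℤ)) := by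
    rw [← Finset.sum_range_reflect (fun j => intChoose (L:ℤ) ((a:ℤ)+1+(j:ℤ))) (i-1)]
    apply Finset.sum_congr rfl
    intro j hj
    have hj' : j < i-1 := Finset.mem_range.mp hj
    congr 1
    omega
  rw [hrefl]
  have hsplitn : ∑ j ∈ range n, intChoose (L:ℤ) ((a:ℤ)+1+(j:ℤ))
      = ∑ j ∈ range (i-1), intChoose (L:ℤ) ((a:ℤ)+1+(j:ℤ))
        + ∑ j ∈ Finset.Ico (i-1) n, intChoose (L:ℤ) ((a:ℤ)+1+(j:ℤ)) := by
    rw [Finset.range_eq_Ico, ← Finset.sum_Ico_consecutive _ (Nat.zero_le (i-1)) (by omega : i-1 ≤ n), Finset.range_eq_Ico]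
  have hIco : ∑ j ∈ Finset.Ico (i-1) n, intChoose (L:ℤ) ((a:ℤ)+1+(j:ℤ))
      = ∑ j ∈ range n, intChoose (L:ℤ) ((a:ℤ) - (j:ℤ)) := by
    rw [Finset.sum_Ico_eq_sum_range]
    have hsize : n - (i-1) = a+1 := by omega
    rw [hsize]
    have hR : ∑ j ∈ range n, intChoose (L:ℤ) ((a:ℤ)-(j:ℤ))
        = ∑ j ∈ range (a+1), intChoose (L:ℤ) ((a:ℤ)-(j:ℤ)) := by
      symm
      apply Finset.sum_subset (by rw [Finset.range_subset_range]; omega)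
      intro x hx hnx
      rw [Finset.mem_range] at hx hnx
      exact intChoose_neg (Or.inl (by omega))
    rw [hR]
    apply Finset.sum_congr rfl
    intro t ht
    rw [Finset.mem_range] at ht
    rw [intChoose_symm]
    congr 1
    omega
  rw [hsplitn, hIco]
  all_goals ring

end AuxProof

/-- For `1 ≤ i ≤ n`, the cardinality of `𝔅_n(i)` equals
`∑_{k=1}^{n-1} 2^k · (C(2n-i-k-1, n-i) - C(2n-i-k-1, n-i-k))`. -/
theorem card_BPathsF_small (n i : ℕ) (hn : 2 ≤ n) (hi1 : 1 ≤ i) (hin : i ≤ n) :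
    ((BPathsF n i).card : ℤ) =
      ∑ k ∈ Finset.Icc 1 (n-1), (2:ℤ)^k *
        (intChoose (2*(n:ℤ) - i - k - 1) ((n:ℤ) - i) -
          intChoose (2*(n:ℤ) - i - k - 1) ((n:ℤ) - i - k)) := by
  rcases eq_or_lt_of_le hi1 with h1 | h2
  · -- case i = 1
    have hi : i = 1 := h1.symm
    subst hi
    have hempty : BPathsF n 1 = ∅ := by
      apply Finset.eq_empty_of_forall_notMem
      intro w hw
      simp only [BPathsF, Finset.mem_filter] at hw
      obtain ⟨hwB, _, hf⟩ := hw
      have h0 : (0:ℕ) < 2*n := by omega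
      have hw0 : w ⟨0, h0⟩ = false := hf ⟨0, h0⟩ rfl
      rw [mem_BPaths] at hwB
      have hE : extW w 0 = false := by
        rw [show (0:ℕ) = ((⟨0,h0⟩ : Fin (2*n)) : ℕ) from rfl, extW_coe, hw0]
      have hthis := hwB 1 (by omega)
      rw [show (1:ℕ) = 0 + 1 from rfl, cnt_succ, cnt_succ, cnt_zero, cnt_zero, hE] at hthis
      simp at hthis
    rw [hempty]
    simp only [Finset.card_empty, Nat.cast_zero]
    symm
    apply Finset.sum_eq_zero
    intro k hk
    push_cast
    have hs : intChoose (2*(n:ℤ) - 1 - k - 1) ((n:ℤ) - 1)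
        = intChoose (2*(n:ℤ) - 1 - k - 1) ((n:ℤ) - 1 - k) := by
      rw [intChoose_symm]
      congr 1
      ring
    rw [hs]
    ring
  · -- case 2 ≤ i
    have hi2 : 2 ≤ i := h2
    rw [card_BPathsF_eq_Wgood n i hi2 hin, card_Wgood, fwalk_eq]
    exact partC n i (2*n-i) (n-i) hi2 hin rfl rfl
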